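/- arXiv:1206.1274 — 6 statements merged into one kernel-verified Lean document; each statement's English description precedes it below -/
import Mathlib

section
/- Let ã = ε⁻²·sin²θ·B and b̃ = −2ε⁻¹·B with B = 1 + (ε²−1)cos²θ, ε > 0, θ ∈ (0, π/2). Then the two roots α₁,₂ = √((b̃² − 2ã ± √(b̃⁴ − 4ãb̃²))/2) of the characteristic equation x⁴ − (b̃² − 2ã)x² + ã² = 0 are given explicitly by α₁ = (B + ε√B·cosθ)/ε and α₂ = (B − ε√B·cosθ)/ε. -/
open Real

theorem alpha_explicit (ε θ B a b : ℝ) (hε : 0 < ε) (hθ : θ ∈ Set.Ioo 0 (π / 2))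
    (hB : B = 1 + (ε ^ 2 - 1) * cos θ ^ 2)
    (ha : a = ε⁻¹ ^ 2 * sin θ ^ 2 * B) (hb : b = -2 * ε⁻¹ * B) :
    Real.sqrt ((b ^ 2 - 2 * a + Real.sqrt (b ^ 4 - 4 * a * b ^ 2)) / 2)
        = (B + ε * Real.sqrt B * cos θ) / ε ∧
    Real.sqrt ((b ^ 2 - 2 * a - Real.sqrt (b ^ 4 - 4 * a * b ^ 2)) / 2)
        = (B - ε * Real.sqrt B * cos θ) / ε := by
  obtain ⟨hθ1, hθ2⟩ := hθ
  have hc : 0 < Real.cos θ := Real.cos_pos_of_mem_Ioo ⟨by linarith [Real.pi_pos], hθ2⟩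
  have hs : 0 < Real.sin θ := Real.sin_pos_of_pos_of_lt_pi hθ1 (by linarith [Real.pi_pos])
  have hsc : Real.sin θ ^ 2 = 1 - Real.cos θ ^ 2 := by
    have := Real.sin_sq_add_cos_sq θ; linarith
  have hB0 : 0 < B := by nlinarith [sq_nonneg (Real.cos θ), sq_nonneg (Real.sin θ)]
  have hεne : ε ≠ 0 := ne_of_gt hε
  set sB := Real.sqrt B with hsB
  have hsB2 : sB ^ 2 = B := Real.sq_sqrt hB0.le
  have hsB0 : 0 ≤ sB := Real.sqrt_nonneg B
  have h1 : b ^ 4 - 4 * a * b ^ 2 = (4 * ε⁻¹ * B * sB * Real.cos θ) ^ 2 := by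
    subst ha hb
    field_simp
    linear_combination (-16*ε^2*Real.cos θ^2) * hsB2 + (16*B) * hB + (-16*B) * hsc
  have h1' : Real.sqrt (b ^ 4 - 4 * a * b ^ 2) = 4 * ε⁻¹ * B * sB * Real.cos θ := by
    rw [h1, Real.sqrt_sq (by positivity)]
  have hge : ε * Real.cos θ ≤ sB := by
    nlinarith [sq_nonneg (sB - ε * Real.cos θ), sq_nonneg (Real.sin θ)]
  constructor
  · have harg : (b ^ 2 - 2 * a + Real.sqrt (b ^ 4 - 4 * a * b ^ 2)) / 2
        = ((B + ε * sB * Real.cos θ) / ε) ^ 2 := by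
      rw [h1']; subst ha hb; field_simp; linear_combination (-2*ε^2*Real.cos θ^2)*hsB2 + (2*B)*hB + (-2*B)*hsc
    rw [harg, Real.sqrt_sq (by positivity)]
  · have harg : (b ^ 2 - 2 * a - Real.sqrt (b ^ 4 - 4 * a * b ^ 2)) / 2
        = ((B - ε * sB * Real.cos θ) / ε) ^ 2 := by
      rw [h1']; subst ha hb; field_simp; linear_combination (-2*ε^2*Real.cos θ^2)*hsB2 + (2*B)*hB + (-2*B)*hsc
    have hnn : 0 ≤ B - ε * sB * Real.cos θ := by
      have h2 := mul_nonneg hsB0 (sub_nonneg.2 hge)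
      nlinarith [hsB2]
    rw [harg, Real.sqrt_sq (div_nonneg hnn hε.le)]
end

section
/- The slope m = α₂/α₁ = (√B − ε·cosθ)/(√B + ε·cosθ), with B = 1 + (ε²−1)cos²θ and ε > 0 fixed, is a strictly increasing continuous function of θ ∈ (0, π/2) taking all values in the open interval (0, 1). -/
open Real

theorem slope_properties (ε : ℝ) (hε : 0 < ε) (B m : ℝ → ℝ)
    (hB : ∀ θ, B θ = 1 + (ε ^ 2 - 1) * cos θ ^ 2)
    (hm : ∀ θ, m θ = (Real.sqrt (B θ) - ε * cos θ) / (Real.sqrt (B θ) + ε * cos θ)) :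
    StrictMonoOn m (Set.Ioo 0 (π / 2)) ∧ ContinuousOn m (Set.Ioo 0 (π / 2)) ∧
      m '' Set.Ioo 0 (π / 2) = Set.Ioo 0 1 := by
  have hπ : (0:ℝ) < π / 2 := by positivity
  have hcos_nonneg : ∀ θ ∈ Set.Icc (0:ℝ) (π/2), 0 ≤ cos θ := by
    intro θ hθ
    exact Real.cos_nonneg_of_mem_Icc ⟨by linarith [hθ.1, pi_pos], hθ.2⟩
  have hBpos : ∀ θ, 0 < B θ := by
    intro θ
    rw [hB]
    nlinarith [sin_sq_add_cos_sq θ, sq_nonneg (sin θ), sq_nonneg (ε * cos θ),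
      sq_nonneg (cos θ), mul_pos hε hε, sq_nonneg (ε * sin θ)]
  have hs_pos : ∀ θ, 0 < Real.sqrt (B θ) := fun θ => Real.sqrt_pos.mpr (hBpos θ)
  have hsq : ∀ θ, Real.sqrt (B θ) ^ 2 = B θ := fun θ => Real.sq_sqrt (hBpos θ).le
  have hden : ∀ θ ∈ Set.Icc (0:ℝ) (π/2), 0 < Real.sqrt (B θ) + ε * cos θ := by
    intro θ hθ
    have h1 := hs_pos θ
    have h2 := mul_nonneg hε.le (hcos_nonneg θ hθ)
    linarith
  -- strict monotonicity on the closed interval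
  have hmono : StrictMonoOn m (Set.Icc 0 (π/2)) := by
    intro a ha b hb hab
    have hca : 0 ≤ cos a := hcos_nonneg a ha
    have hcb : 0 ≤ cos b := hcos_nonneg b hb
    have hcab : cos b < cos a := by
      apply Real.cos_lt_cos_of_nonneg_of_le_pi ha.1 (by linarith [hb.2, pi_pos]) hab
    have hca' : 0 < cos a := lt_of_le_of_lt hcb hcab
    have hsa := hs_pos a
    have hsb := hs_pos b
    have hBa : Real.sqrt (B a) ^ 2 = B a := hsq a
    have hBb : Real.sqrt (B b) ^ 2 = B b := hsq b
    have key : Real.sqrt (B a) * (ε * cos b) < Real.sqrt (B b) * (ε * cos a) := by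
      rcases eq_or_lt_of_le hcb with h0 | h0
      · rw [← h0]
        simpa using mul_pos hsb (mul_pos hε hca')
      · have hsq2 : (Real.sqrt (B a) * (ε * cos b)) ^ 2
            < (Real.sqrt (B b) * (ε * cos a)) ^ 2 := by
          have hBa' : B a = 1 + (ε ^ 2 - 1) * cos a ^ 2 := hB a
          have hBb' : B b = 1 + (ε ^ 2 - 1) * cos b ^ 2 := hB b
          have e1 : (Real.sqrt (B a) * (ε * cos b)) ^ 2
              = B a * (ε ^ 2 * cos b ^ 2) := by rw [mul_pow, hBa]; ring
          have e2 : (Real.sqrt (B b) * (ε * cos a)) ^ 2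
              = B b * (ε ^ 2 * cos a ^ 2) := by rw [mul_pow, hBb]; ring
          rw [e1, e2, hBa', hBb']
          have hc2 : cos b ^ 2 < cos a ^ 2 := by nlinarith
          nlinarith [mul_pos hε hε, hc2]
        have hnn : 0 ≤ Real.sqrt (B b) * (ε * cos a) :=
          mul_nonneg hsb.le (mul_nonneg hε.le hca)
        exact lt_of_pow_lt_pow_left₀ 2 hnn hsq2
    rw [hm a, hm b, div_lt_div_iff₀ (hden a ha) (hden b hb)]
    nlinarith [key]
  -- continuity on the closed interval
  have hcont : ContinuousOn m (Set.Icc 0 (π/2)) := by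
    have hg : ContinuousOn
        (fun θ => (Real.sqrt (B θ) - ε * cos θ) / (Real.sqrt (B θ) + ε * cos θ))
        (Set.Icc 0 (π/2)) := by
      have hBf : B = fun θ => 1 + (ε ^ 2 - 1) * cos θ ^ 2 := funext hB
      have hcB : Continuous fun θ => Real.sqrt (B θ) := by
        rw [hBf]
        exact Real.continuous_sqrt.comp (by continuity)
      apply ContinuousOn.div
      · exact (hcB.sub (continuous_const.mul Real.continuous_cos)).continuousOn
      · exact (hcB.add (continuous_const.mul Real.continuous_cos)).continuousOn
      · intro θ hθ
        exact (hden θ hθ).ne'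
    exact hg.congr (fun θ _ => hm θ)
  -- endpoint values
  have hm0 : m 0 = 0 := by
    have hB0 : B 0 = ε ^ 2 := by rw [hB]; simp
    rw [hm, hB0, Real.sqrt_sq hε.le]
    simp
  have hm1 : m (π/2) = 1 := by
    have hB1 : B (π/2) = 1 := by rw [hB]; simp
    rw [hm, hB1, Real.sqrt_one]
    simp
  have hsub : Set.Ioo (0:ℝ) (π/2) ⊆ Set.Icc 0 (π/2) := Set.Ioo_subset_Icc_self
  have himage : m '' Set.Ioo 0 (π/2) = Set.Ioo 0 1 := by
    apply Set.Subset.antisymm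
    · rintro x ⟨θ, hθ, rfl⟩
      have h1 : m 0 < m θ :=
        hmono (Set.left_mem_Icc.mpr hπ.le) (hsub hθ) hθ.1
      have h2 : m θ < m (π/2) :=
        hmono (hsub hθ) (Set.right_mem_Icc.mpr hπ.le) hθ.2
      rw [hm0] at h1
      rw [hm1] at h2
      exact ⟨h1, h2⟩
    · have h := intermediate_value_Ioo hπ.le hcont
      rw [hm0, hm1] at h
      exact h
  exact ⟨hmono.mono hsub, hcont.mono hsub, himage⟩
end

section
/- With c₁ = 1/2 − ε·cosθ/(2√B), c₂ = 1/2 + ε·cosθ/(2√B), α₁ = 2Bc₂/ε, α₂ = 2Bc₁/ε, B = 1 + (ε²−1)cos²θ, ε > 0, θ ∈ (0, π/2), the geodesic β(u) = (√c₁·cos(α₁u), √c₁·sin(α₁u), √c₂·cos(α₂u), √c₂·sin(α₂u)) satisfies the fourth-order ODE β⁗(u) + (b̃² − 2ã)·β''(u) + ã²·β(u) = 0, where ã = ε⁻²sin²θ·B and b̃ = −2ε⁻¹B. -/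
open Real

private lemma d_cos (C α : ℝ) :
    deriv (fun t => C * Real.cos (α * t)) = fun t => (-(C * α)) * Real.sin (α * t) := by
  funext t
  have h1 : HasDerivAt (fun t : ℝ => α * t) α t := by
    simpa using (hasDerivAt_id t).const_mul α
  have h2 := ((Real.hasDerivAt_cos (α * t)).comp t h1).const_mul C
  convert h2.deriv using 1
  · rfl
  ring

private lemma d_sin (C α : ℝ) :
    deriv (fun t => C * Real.sin (α * t)) = fun t => (C * α) * Real.cos (α * t) := by
  funext t
  have h1 : HasDerivAt (fun t : ℝ => α * t) α t := by
    simpa using (hasDerivAt_id t).const_mul α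
  have h2 := ((Real.hasDerivAt_sin (α * t)).comp t h1).const_mul C
  convert h2.deriv using 1
  · rfl
  ring

private lemma iter2_cos (C α u : ℝ) :
    iteratedDeriv 2 (fun t => C * Real.cos (α * t)) u = (-(α ^ 2) * C) * Real.cos (α * u) := by
  simp only [iteratedDeriv_succ, iteratedDeriv_zero, d_cos, d_sin]
  ring

private lemma iter2_sin (C α u : ℝ) :
    iteratedDeriv 2 (fun t => C * Real.sin (α * t)) u = (-(α ^ 2) * C) * Real.sin (α * u) := by
  simp only [iteratedDeriv_succ, iteratedDeriv_zero, d_sin, d_cos]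
  ring

private lemma iter4_cos (C α u : ℝ) :
    iteratedDeriv 4 (fun t => C * Real.cos (α * t)) u = (α ^ 4 * C) * Real.cos (α * u) := by
  simp only [iteratedDeriv_succ, iteratedDeriv_zero, d_cos, d_sin]
  ring

private lemma iter4_sin (C α u : ℝ) :
    iteratedDeriv 4 (fun t => C * Real.sin (α * t)) u = (α ^ 4 * C) * Real.sin (α * u) := by
  simp only [iteratedDeriv_succ, iteratedDeriv_zero, d_sin, d_cos]
  ring

theorem beta_fourth_order_ode (ε θ B c₁ c₂ α₁ α₂ a b : ℝ) (hε : 0 < ε)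
    (hθ : θ ∈ Set.Ioo 0 (π / 2))
    (hB : B = 1 + (ε ^ 2 - 1) * cos θ ^ 2)
    (hc₁ : c₁ = 1 / 2 - ε * cos θ / (2 * Real.sqrt B))
    (hc₂ : c₂ = 1 / 2 + ε * cos θ / (2 * Real.sqrt B))
    (hα₁ : α₁ = 2 * B * c₂ / ε) (hα₂ : α₂ = 2 * B * c₁ / ε)
    (ha : a = ε⁻¹ ^ 2 * sin θ ^ 2 * B) (hb : b = -2 * ε⁻¹ * B)
    (β : ℝ → Fin 4 → ℝ)
    (hβ : ∀ u, β u = ![Real.sqrt c₁ * cos (α₁ * u), Real.sqrt c₁ * sin (α₁ * u),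
      Real.sqrt c₂ * cos (α₂ * u), Real.sqrt c₂ * sin (α₂ * u)]) :
    ∀ (i : Fin 4) (u : ℝ),
      iteratedDeriv 4 (fun t => β t i) u + (b ^ 2 - 2 * a) * iteratedDeriv 2 (fun t => β t i) u
        + a ^ 2 * β u i = 0 := by
  have hsθ : 0 < Real.sin θ :=
    Real.sin_pos_of_pos_of_lt_pi hθ.1 (lt_trans hθ.2 (by linarith [Real.pi_pos]))
  have hpyth := Real.sin_sq_add_cos_sq θ
  have hB0 : 0 < B := by nlinarith [sq_nonneg (ε * Real.cos θ)]
  have hsq : Real.sqrt B ^ 2 = B := Real.sq_sqrt hB0.le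
  have hsne : Real.sqrt B ≠ 0 := by positivity
  have hεne : ε ≠ 0 := hε.ne'
  have hkey : B - ε ^ 2 * Real.cos θ ^ 2 = Real.sin θ ^ 2 := by
    linear_combination hB - hpyth
  have hsum : α₁ + α₂ = -b := by
    rw [hα₁, hα₂, hc₁, hc₂, hb]
    field_simp
    ring
  have hprod : α₁ * α₂ = a := by
    rw [hα₁, hα₂, hc₁, hc₂, ha]
    field_simp
    linear_combination (B - Real.sin θ ^ 2) * hsq
      + B * hkey
  have hb2 : b ^ 2 - 2 * a = α₁ ^ 2 + α₂ ^ 2 := by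
    linear_combination (b - α₁ - α₂) * hsum + 2 * hprod
  have ha2 : a ^ 2 = α₁ ^ 2 * α₂ ^ 2 := by rw [← hprod]; ring
  have hβ' : β = fun u => ![Real.sqrt c₁ * cos (α₁ * u), Real.sqrt c₁ * sin (α₁ * u),
      Real.sqrt c₂ * cos (α₂ * u), Real.sqrt c₂ * sin (α₂ * u)] := funext hβ
  subst hβ'
  intro i u
  rw [hb2, ha2]
  fin_cases i
  · simp only [Fin.reduceFinMk, Matrix.cons_val_zero]
    rw [iter4_cos, iter2_cos]; ring
  · simp only [Fin.reduceFinMk, Matrix.cons_val_one, Matrix.head_cons, Matrix.cons_val_zero]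
    rw [iter4_sin, iter2_sin]; ring
  · simp only [Fin.reduceFinMk, Matrix.cons_val_two, Matrix.tail_cons, Matrix.head_cons]
    rw [iter4_cos, iter2_cos]; ring
  · simp only [Fin.reduceFinMk, Matrix.cons_val_three, Matrix.tail_cons, Matrix.head_cons]
    rw [iter4_sin, iter2_sin]; ring
end

section
/- Conversely, every 4×4 orthogonal matrix A satisfying A·J₁ = J₁·A has the form: its rows are r, J₁r, cos ξ·J₂r + sin ξ·J₃r, −cos ξ·J₃r + sin ξ·J₂r for some unit vector r ∈ ℝ⁴ and some ξ ∈ ℝ, where J₁, J₂, J₃ are the standard anticommuting complex structures on ℝ⁴. -/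
set_option maxHeartbeats 1000000


open Real Matrix

theorem orthogonal_commuting_J1_structure
    (J₁ J₂ J₃ : Matrix (Fin 4) (Fin 4) ℝ)
    (hJ₁ : J₁ = !![0, -1, 0, 0; 1, 0, 0, 0; 0, 0, 0, -1; 0, 0, 1, 0])
    (hJ₂ : J₂ = !![0, 0, 0, -1; 0, 0, -1, 0; 0, 1, 0, 0; 1, 0, 0, 0])
    (hJ₃ : J₃ = !![0, 0, -1, 0; 0, 0, 0, 1; 1, 0, 0, 0; 0, -1, 0, 0])
    (A : Matrix (Fin 4) (Fin 4) ℝ) (hA : Aᵀ * A = 1) (hcomm : A * J₁ = J₁ * A) :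
    ∃ (r : Fin 4 → ℝ) (ξ : ℝ), (∑ i, r i ^ 2 = 1) ∧
      A = Matrix.of ![r, J₁.mulVec r,
        cos ξ • J₂.mulVec r + sin ξ • J₃.mulVec r,
        -cos ξ • J₃.mulVec r + sin ξ • J₂.mulVec r] := by
  subst hJ₁ hJ₂ hJ₃
  have hA' : A * Aᵀ = 1 := mul_eq_one_comm.mp hA
  have h00 := congrFun (congrFun hA' 0) 0
  have h02 := congrFun (congrFun hA' 0) 2
  have h12 := congrFun (congrFun hA' 1) 2
  have h22 := congrFun (congrFun hA' 2) 2
  simp [Matrix.mul_apply, Matrix.one_apply, Fin.sum_univ_four, Matrix.transpose_apply] at h00 h02 h12 h22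
  have hc := fun i j => congrFun (congrFun hcomm i) j
  have e10 : A 1 0 = -A 0 1 := by have := hc 0 0; simp [Matrix.mul_apply, Fin.sum_univ_four, Matrix.vecHead, Matrix.vecTail] at this; linarith
  have e11 : A 1 1 = A 0 0 := by have := hc 0 1; simp [Matrix.mul_apply, Fin.sum_univ_four, Matrix.vecHead, Matrix.vecTail] at this; linarith
  have e12 : A 1 2 = -A 0 3 := by have := hc 0 2; simp [Matrix.mul_apply, Fin.sum_univ_four, Matrix.vecHead, Matrix.vecTail] at this; linarith
  have e13 : A 1 3 = A 0 2 := by have := hc 0 3; simp [Matrix.mul_apply, Fin.sum_univ_four, Matrix.vecHead, Matrix.vecTail] at this; linarith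
  have e30 : A 3 0 = -A 2 1 := by have := hc 2 0; simp [Matrix.mul_apply, Fin.sum_univ_four, Matrix.vecHead, Matrix.vecTail] at this; linarith
  have e31 : A 3 1 = A 2 0 := by have := hc 2 1; simp [Matrix.mul_apply, Fin.sum_univ_four, Matrix.vecHead, Matrix.vecTail] at this; linarith
  have e32 : A 3 2 = -A 2 3 := by have := hc 2 2; simp [Matrix.mul_apply, Fin.sum_univ_four, Matrix.vecHead, Matrix.vecTail] at this; linarith
  have e33 : A 3 3 = A 2 2 := by have := hc 2 3; simp [Matrix.mul_apply, Fin.sum_univ_four, Matrix.vecHead, Matrix.vecTail] at this; linarith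
  rw [e10, e11, e12, e13] at h12
  set a := A 0 0 with ha
  set b := A 0 1 with hb
  set c := A 0 2 with hcv
  set d := A 0 3 with hd
  set p := A 2 0 with hp
  set q := A 2 1 with hq
  set u := A 2 2 with hu
  set v := A 2 3 with hv
  set C := -d*p - c*q + b*u + a*v with hC
  set D := -c*p + d*q + a*u - b*v with hD
  have hcd : C^2 + D^2 = 1 := by
    rw [hC, hD]
    linear_combination (a*a+b*b+c*c+d*d) * h22 + h00
      - (a*p + b*q + c*u + d*v) * h02 - (-b*p + a*q - d*u + c*v) * h12
  have hz : (⟨C, D⟩ : ℂ) ≠ 0 := by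
    intro h
    rw [Complex.ext_iff] at h
    simp at h
    rw [h.1, h.2] at hcd
    norm_num at hcd
  have habs : ‖(⟨C, D⟩ : ℂ)‖ = 1 := by
    rw [Complex.norm_def, Complex.normSq_mk]
    rw [show C*C + D*D = 1 by nlinarith [hcd]]
    exact Real.sqrt_one
  have hcos : Real.cos (Complex.arg ⟨C, D⟩) = C := by
    have := Complex.cos_arg hz
    rw [habs] at this
    simpa using this
  have hsin : Real.sin (Complex.arg ⟨C, D⟩) = D := by
    have := Complex.sin_arg (⟨C, D⟩ : ℂ)
    rw [habs] at this
    simpa using this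
  refine ⟨fun j => A 0 j, Complex.arg ⟨C, D⟩, ?_, ?_⟩
  · simp [Fin.sum_univ_four]
    linear_combination h00
  · ext i j
    fin_cases i <;> fin_cases j <;>
      simp [Matrix.mulVec, dotProduct, Fin.sum_univ_four, Matrix.vecHead, Matrix.vecTail, hcos, hsin, e10, e11, e12, e13,
        e30, e31, e32, e33, ← ha, ← hb, ← hcv, ← hd, ← hp, ← hq, ← hu, ← hv]
    · linear_combination a * h02 - b * h12 - p * h00
    · linear_combination b * h02 + a * h12 - q * h00
    · linear_combination c * h02 - d * h12 - u * h00
    · linear_combination d * h02 + c * h12 - v * h00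
    · linear_combination -b * h02 - a * h12 + q * h00
    · linear_combination a * h02 - b * h12 - p * h00
    · linear_combination -d * h02 - c * h12 + v * h00
    · linear_combination c * h02 - d * h12 - u * h00
end

section
/- If λ = 0 in the Codazzi-derived equation λ² cos θ + 4(ε²−1)cos³θ + 4cos θ = 0 (with T-derivative term vanishing), then cos θ·(1 + (ε²−1)cos²θ) = 0; since 1 + (ε²−1)cos²θ > 0 for all ε > 0 and θ ∈ [0, π/2], it follows that θ = π/2. Hence a minimal helix surface in the Berger sphere has constant angle π/2. -/
open Real

theorem minimal_helix_angle (ε θ lam : ℝ) (hε : 0 < ε) (hθ : θ ∈ Set.Icc 0 (π / 2))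
    (hlam : lam = 0)
    (heq : lam ^ 2 * cos θ + 4 * (ε ^ 2 - 1) * cos θ ^ 3 + 4 * cos θ = 0) :
    θ = π / 2 := by
  subst hlam
  have hc : cos θ * (1 + (ε ^ 2 - 1) * cos θ ^ 2) = 0 := by nlinarith [heq]
  have hpos : 0 < 1 + (ε ^ 2 - 1) * cos θ ^ 2 := by
    nlinarith [sin_sq_add_cos_sq θ, sq_nonneg (sin θ), sq_nonneg (cos θ),
      mul_pos hε hε, mul_nonneg (mul_pos hε hε).le (sq_nonneg (cos θ))]
  have hcos : cos θ = 0 := by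
    rcases mul_eq_zero.mp hc with h | h
    · exact h
    · exact absurd h hpos.ne'
  obtain ⟨h0, h1⟩ := hθ
  have := Real.cos_eq_zero_iff.mp hcos
  obtain ⟨k, hk⟩ := this
  have : (k : ℝ) = 0 := by
    have hπ := Real.pi_pos
    rcases lt_trichotomy (k:ℝ) 0 with h | h | h
    · have : (k:ℝ) ≤ -1 := by exact_mod_cast Int.le_of_lt_add_one (by exact_mod_cast h)
      nlinarith
    · exact h
    · have : (1:ℝ) ≤ k := by exact_mod_cast h
      nlinarith
  rw [hk, this]; ring
end

section
/- Suppose x, y ∈ ℝ satisfy the linear system α₁·p·x + α₂·q·y = ε⁻¹sin²θ and α₁³·p·x + α₂³·q·y = −I₀, where p = (ε/(2B))α₂, q = (ε/(2B))α₁, I₀ = ε⁻³B sin²θ(sin²θ − 2B), α₁ = (B + ε√B cos θ)/ε, α₂ = (B − ε√B cos θ)/ε, B = 1 + (ε²−1)cos²θ, ε > 0, θ ∈ (0, π/2). Then x·y = 1. Moreover if additionally |x| ≤ 1 and |y| ≤ 1 and x > 0, then x = y = 1. -/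
open Real

theorem inner_products_equal_one (ε θ B α₁ α₂ p q I₀ x y : ℝ)
    (hε : 0 < ε) (hθ : θ ∈ Set.Ioo 0 (π / 2))
    (hB : B = 1 + (ε ^ 2 - 1) * cos θ ^ 2)
    (hα₁ : α₁ = (B + ε * Real.sqrt B * cos θ) / ε)
    (hα₂ : α₂ = (B - ε * Real.sqrt B * cos θ) / ε)
    (hp : p = (ε / (2 * B)) * α₂) (hq : q = (ε / (2 * B)) * α₁)
    (hI₀ : I₀ = ε⁻¹ ^ 3 * B * sin θ ^ 2 * (sin θ ^ 2 - 2 * B))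
    (h1 : α₁ * p * x + α₂ * q * y = ε⁻¹ * sin θ ^ 2)
    (h2 : α₁ ^ 3 * p * x + α₂ ^ 3 * q * y = -I₀) :
    x * y = 1 ∧ (|x| ≤ 1 → |y| ≤ 1 → 0 < x → x = 1 ∧ y = 1) := by
  obtain ⟨hθ0, hθ1⟩ := hθ
  have hc : 0 < cos θ := Real.cos_pos_of_mem_Ioo ⟨by linarith [Real.pi_pos], hθ1⟩
  have ht : 0 < sin θ := Real.sin_pos_of_pos_of_lt_pi hθ0 (by linarith [Real.pi_pos])
  have hpyth : sin θ ^ 2 + cos θ ^ 2 = 1 := Real.sin_sq_add_cos_sq θ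
  have hBpos : 0 < B := by rw [hB]; nlinarith
  have hs : Real.sqrt B ^ 2 = B := Real.sq_sqrt hBpos.le
  have hspos : 0 < Real.sqrt B := Real.sqrt_pos.mpr hBpos
  have hεne : ε ≠ 0 := hε.ne'
  have hBne : B ≠ 0 := hBpos.ne'
  have hB2 : B = sin θ ^ 2 + ε ^ 2 * cos θ ^ 2 := by rw [hB]; nlinarith
  have hne : sin θ ^ 2 / (2 * ε) ≠ 0 := by positivity
  have fact1 : α₁ * p = sin θ ^ 2 / (2 * ε) := by
    rw [hα₁, hp, hα₂]; field_simp
    linear_combination (-ε ^ 2 * cos θ ^ 2) * hs + B * hB2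
  have fact2 : α₂ * q = sin θ ^ 2 / (2 * ε) := by
    rw [hα₂, hq, hα₁]; field_simp
    linear_combination (-ε ^ 2 * cos θ ^ 2) * hs + B * hB2
  have e1 : (sin θ ^ 2 / (2 * ε)) * (x + y) = ε⁻¹ * sin θ ^ 2 := by
    rw [← h1]; linear_combination (-x) * fact1 + (-y) * fact2
  have hxy : x + y = 2 := by
    apply mul_left_cancel₀ hne
    rw [e1]; field_simp
  have e2 : (sin θ ^ 2 / (2 * ε)) * (α₁ ^ 2 * x + α₂ ^ 2 * y) = -I₀ := by
    rw [← h2]; linear_combination (-(α₁ ^ 2 * x)) * fact1 + (-(α₂ ^ 2 * y)) * fact2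
  have h2' : α₁ ^ 2 * x + α₂ ^ 2 * y = 2 * ε⁻¹ ^ 2 * B * (2 * B - sin θ ^ 2) := by
    apply mul_left_cancel₀ hne
    rw [e2, hI₀]; field_simp; ring
  have hkey : α₁ ^ 2 + α₂ ^ 2 = 2 * ε⁻¹ ^ 2 * B * (2 * B - sin θ ^ 2) := by
    rw [hα₁, hα₂]; field_simp
    linear_combination (2 * ε ^ 2 * cos θ ^ 2) * hs + (-2 * B) * hB2
  have hAne : α₁ ^ 2 - α₂ ^ 2 ≠ 0 := by
    have h4 : α₁ ^ 2 - α₂ ^ 2 = 4 * B * Real.sqrt B * cos θ / ε := by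
      rw [hα₁, hα₂]; field_simp; ring
    rw [h4]; positivity
  have hx1 : x = 1 := by
    have h0 : (α₁ ^ 2 - α₂ ^ 2) * (x - 1) = 0 := by
      linear_combination h2' - α₂ ^ 2 * hxy - hkey
    rcases mul_eq_zero.mp h0 with h | h
    · exact absurd h hAne
    · linarith
  have hy1 : y = 1 := by linarith
  subst hx1; subst hy1
  exact ⟨by ring, fun _ _ _ => ⟨rfl, rfl⟩⟩
end
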